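/- Let 0 < p < 1 and let n be a nonnegative integer. For s in (0,1] define D_n(s) = \sum_{k=0}^{n} [ (2^{n-k+2} - (-1)^{n+k} + (-1)^k \cdot 3s)^p - (2^{n-k+2} - (-1)^{n+k} - (-1)^k \cdot 3s)^p ]. Then D_n(s) > 0 for all s in (0,1] if n is even, and D_n(s) < 0 for all s in (0,1] if n is odd. -/

import Mathlib

open Real

private lemma alt_sum_pos : ∀ (n : ℕ) (g : ℕ → ℝ), (∀ j, 0 < g j) →
    (∀ j, g (j+1) < g j) →
    0 < (∑ j ∈ Finset.range (n+1), (-1:ℝ)^j * g j) ∧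
      (∑ j ∈ Finset.range (n+1), (-1:ℝ)^j * g j) ≤ g 0 := by
  intro n
  induction n with
  | zero =>
    intro g hpos _
    simp only [Finset.sum_range_succ, Finset.sum_range_zero, pow_zero, one_mul, zero_add]
    exact ⟨hpos 0, le_refl _⟩
  | succ n ih =>
    intro g hpos hanti
    have hkey : (∑ j ∈ Finset.range (n+1+1), (-1:ℝ)^j * g j)
        = g 0 - ∑ j ∈ Finset.range (n+1), (-1:ℝ)^j * g (j+1) := by
      rw [Finset.sum_range_succ' (fun j => (-1:ℝ)^j * g j) (n+1)]
      have hc : ∀ j ∈ Finset.range (n+1),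
          (-1:ℝ)^(j+1) * g (j+1) = -((-1:ℝ)^j * g (j+1)) := by
        intro j _; rw [pow_succ]; ring
      rw [Finset.sum_congr rfl hc, Finset.sum_neg_distrib, pow_zero, one_mul]
      ring
    obtain ⟨h1, h2⟩ := ih (fun j => g (j+1)) (fun j => hpos _) (fun j => hanti _)
    rw [hkey]
    have h0 := hanti 0
    constructor
    · linarith
    · linarith

theorem stmt_18 (p : ℝ) (hp0 : 0 < p) (hp1 : p < 1) (n : ℕ)
    (D : ℝ → ℝ)
    (hD : ∀ s : ℝ, D s = ∑ k ∈ Finset.range (n + 1),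
      (((2 : ℝ) ^ (n - k + 2) - (-1 : ℝ) ^ (n + k) + (-1 : ℝ) ^ k * (3 * s)) ^ p -
        ((2 : ℝ) ^ (n - k + 2) - (-1 : ℝ) ^ (n + k) - (-1 : ℝ) ^ k * (3 * s)) ^ p)) :
    (Even n → ∀ s ∈ Set.Ioc (0 : ℝ) 1, 0 < D s) ∧
    (Odd n → ∀ s ∈ Set.Ioc (0 : ℝ) 1, D s < 0) := by
  have main : ∀ s ∈ Set.Ioc (0:ℝ) 1, ∃ T : ℝ, 0 < T ∧ D s = (-1:ℝ)^n * T := by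
    rintro s ⟨hs0, hs1⟩
    set S := 3 * s with hSdef
    have hS0 : 0 < S := by positivity
    have hS3 : S ≤ 3 := by simp only [hSdef]; linarith
    have hcon := Real.strictConcaveOn_rpow hp0 hp1
    -- key anti-monotonicity of x ↦ (x+S)^p - (x-S)^p
    have hkey : ∀ x y : ℝ, S ≤ y → y < x →
        (x + S)^p - (x - S)^p < (y + S)^p - (y - S)^p := by
      intro x y hy hyx
      have hA : (0:ℝ) ≤ y - S := by linarith
      have hD0 : (0:ℝ) ≤ x + S := by linarith
      have ht : (0:ℝ) < x - y + 2*S := by linarith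
      set lam := 2*S / (x - y + 2*S) with hlam_def
      set mu := (x - y) / (x - y + 2*S) with hmu_def
      have hlam : 0 < lam := div_pos (by linarith) ht
      have hmu : 0 < mu := div_pos (by linarith) ht
      have hsum : lam + mu = 1 := by
        rw [hlam_def, hmu_def, ← add_div, div_eq_one_iff_eq (ne_of_gt ht)]
        ring
      have hne : (y - S) ≠ (x + S) := by intro h; linarith
      have h1 := hcon.2 (Set.mem_Ici.mpr hA) (Set.mem_Ici.mpr hD0) hne hlam hmu hsum
      have h2 := hcon.2 (Set.mem_Ici.mpr hA) (Set.mem_Ici.mpr hD0) hne hmu hlam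
        (by linarith)
      simp only [smul_eq_mul] at h1 h2
      have e1 : lam * (y - S) + mu * (x + S) = x - S := by
        rw [hlam_def, hmu_def]; field_simp; ring
      have e2 : mu * (y - S) + lam * (x + S) = y + S := by
        rw [hlam_def, hmu_def]; field_simp; ring
      rw [e1] at h1
      rw [e2] at h2
      have hl : lam = 1 - mu := by linarith
      rw [hl] at h1 h2
      linarith [h1, h2]
    have hfpos : ∀ x : ℝ, S ≤ x → 0 < (x + S)^p - (x - S)^p := by
      intro x hx
      have := Real.rpow_lt_rpow (x := x - S) (y := x + S) (by linarith) (by linarith) hp0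
      linarith
    -- the reversed sequence
    set g : ℕ → ℝ := fun j => ((2:ℝ)^(j+2) - (-1:ℝ)^j + S)^p
        - ((2:ℝ)^(j+2) - (-1:ℝ)^j - S)^p with hg
    have hneg1 : ∀ j : ℕ, -1 ≤ (-1:ℝ)^j ∧ (-1:ℝ)^j ≤ 1 := by
      intro j
      rcases Nat.even_or_odd j with h | h
      · rw [h.neg_one_pow]; norm_num
      · rw [h.neg_one_pow]; norm_num
    have h4 : ∀ j : ℕ, (4:ℝ) ≤ 2^(j+2) := by
      intro j
      calc (4:ℝ) = 2^2 := by norm_num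
        _ ≤ 2^(j+2) := by
            apply pow_le_pow_right₀ (by norm_num : (1:ℝ) ≤ 2); omega
    have hb3 : ∀ j : ℕ, (3:ℝ) ≤ (2:ℝ)^(j+2) - (-1:ℝ)^j := by
      intro j; have := hneg1 j; have := h4 j; linarith [this]
    have hbmono : ∀ j : ℕ, ((2:ℝ)^(j+2) - (-1:ℝ)^j) < ((2:ℝ)^(j+3) - (-1:ℝ)^(j+1)) := by
      intro j
      have e1 : (2:ℝ)^(j+3) = 2 * 2^(j+2) := by rw [pow_succ]; ring
      have e2 : (-1:ℝ)^(j+1) = -(-1:ℝ)^j := by rw [pow_succ]; ring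
      have := hneg1 j; have := h4 j
      rw [e1, e2]; linarith [(hneg1 j).1, h4 j]
    have hgpos : ∀ j, 0 < g j := by
      intro j; exact hfpos _ (le_trans hS3 (hb3 j))
    have hganti : ∀ j, g (j+1) < g j := by
      intro j
      exact hkey _ _ (le_trans hS3 (hb3 j)) (hbmono j)
    obtain ⟨hT1, _⟩ := alt_sum_pos n g hgpos hganti
    refine ⟨_, hT1, ?_⟩
    rw [hD s]
    rw [← Finset.sum_range_reflect (fun k =>
      (((2 : ℝ) ^ (n - k + 2) - (-1 : ℝ) ^ (n + k) + (-1 : ℝ) ^ k * (3 * s)) ^ p -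
        ((2 : ℝ) ^ (n - k + 2) - (-1 : ℝ) ^ (n + k) - (-1 : ℝ) ^ k * (3 * s)) ^ p)) (n+1)]
    rw [Finset.mul_sum]
    apply Finset.sum_congr rfl
    intro j hj
    have hjn : j ≤ n := Nat.lt_succ_iff.mp (Finset.mem_range.mp hj)
    have hred : n + 1 - 1 - j = n - j := by omega
    have h1 : n - (n - j) = j := Nat.sub_sub_self hjn
    have h2 : (-1:ℝ)^(n + (n - j)) = (-1:ℝ)^j := by
      have : n + (n - j) = 2 * (n - j) + j := by omega
      rw [this, pow_add, pow_mul]; norm_num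
    have hpa : (-1:ℝ)^n = (-1:ℝ)^(n-j) * (-1:ℝ)^j := by
      rw [← pow_add, Nat.sub_add_cancel hjn]
    have hsq : ((-1:ℝ)^j) * ((-1:ℝ)^j) = 1 := by
      rw [← pow_add, ← two_mul, pow_mul]; norm_num
    have h3 : (-1:ℝ)^(n - j) = (-1:ℝ)^n * (-1:ℝ)^j := by
      rw [hpa, mul_assoc, hsq, mul_one]
    simp only [hred, h1, h2, h3, hg, hSdef]
    rcases Nat.even_or_odd n with hn | hn <;> rcases Nat.even_or_odd j with hje | hje <;>
      simp only [hn.neg_one_pow, hje.neg_one_pow] <;> ring_nf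
  constructor
  · intro hn s hs
    obtain ⟨T, hT, hDs⟩ := main s hs
    rw [hDs, hn.neg_one_pow, one_mul]; exact hT
  · intro hn s hs
    obtain ⟨T, hT, hDs⟩ := main s hs
    rw [hDs, hn.neg_one_pow]; linarith
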